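/- arXiv:1911.06588 — 4 statements merged into one kernel-verified Lean document; each statement's English description precedes it below -/
import Mathlib

section
/- Let A be a finite group acting by automorphisms on a finite group G such that the action of A on G is good. Then for every subgroup B of A and every B-invariant subgroup H of G, the equality [H,B,B] = [H,B] holds (i.e., [[H,B],B] = [H,B]). -/
open scoped Pointwise

section GoodActionDefs

variable {A G : Type*}

/-- The subgroup `[H,B]` generated by commutators `h⁻¹ · (b • h)` with `h ∈ H`, `b ∈ B`,
for an action `φ : A →* MulAut G`. -/
def actCommutator [Group A] [Group G] (φ : A →* MulAut G) (H : Subgroup G) (B : Subgroup A) :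
    Subgroup G :=
  Subgroup.closure {x | ∃ h ∈ H, ∃ b ∈ B, x = h⁻¹ * φ b h}

/-- The subgroup `C_G(B)` of elements of `G` fixed by every element of `B`. -/
def actFixed [Group A] [Group G] (φ : A →* MulAut G) (B : Subgroup A) : Subgroup G where
  carrier := {g | ∀ b ∈ B, φ b g = g}
  one_mem' := fun b _ => map_one (φ b)
  mul_mem' := fun hx hy b hb => by rw [map_mul, hx b hb, hy b hb]
  inv_mem' := fun hx b hb => by rw [map_inv, hx b hb]

/-- `C_H(B) = H ⊓ C_G(B)`. -/
def actCentralizerIn [Group A] [Group G] (φ : A →* MulAut G) (H : Subgroup G) (B : Subgroup A) :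
    Subgroup G :=
  H ⊓ actFixed φ B

/-- `H` is a `B`-invariant subgroup of `G`. -/
def ActInvariant [Group A] [Group G] (φ : A →* MulAut G) (B : Subgroup A) (H : Subgroup G) : Prop :=
  ∀ b ∈ B, ∀ h ∈ H, φ b h ∈ H

/-- The action of `A` on `G` given by `φ` is *good* if `H = [H,B]·C_H(B)` for every subgroup
`B` of `A` and every `B`-invariant subgroup `H` of `G`. -/
def IsGoodAction [Group A] [Group G] (φ : A →* MulAut G) : Prop :=
  ∀ (B : Subgroup A) (H : Subgroup G), ActInvariant φ B H →
    (H : Set G) = (actCommutator φ H B : Set G) * (actCentralizerIn φ H B : Set G)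

end GoodActionDefs

/-- `[H,B] ≤ H` when `H` is `B`-invariant. -/
theorem actCommutator_le_aux {A G : Type*} [Group A] [Group G] (φ : A →* MulAut G)
    (B : Subgroup A) (H : Subgroup G) (hH : ActInvariant φ B H) :
    actCommutator φ H B ≤ H := by
  rw [actCommutator]
  refine (Subgroup.closure_le H).2 ?_
  rintro x ⟨h, hh, b, hb, rfl⟩
  exact H.mul_mem (H.inv_mem hh) (hH b hb h hh)

/-- `H` normalizes `[H,B]`. -/
theorem actCommutator_conj_aux {A G : Type*} [Group A] [Group G] (φ : A →* MulAut G)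
    (B : Subgroup A) (H : Subgroup G) (c : G) (hc : c ∈ H) :
    ∀ k ∈ actCommutator φ H B, c⁻¹ * k * c ∈ actCommutator φ H B := by
  intro k hk
  induction hk using Subgroup.closure_induction with
  | mem x hx =>
    obtain ⟨h, hh, b, hb, rfl⟩ := hx
    have h1 : (h * c)⁻¹ * φ b (h * c) ∈ actCommutator φ H B :=
      Subgroup.subset_closure ⟨h * c, H.mul_mem hh hc, b, hb, rfl⟩
    have h2 : (c⁻¹ * φ b c)⁻¹ ∈ actCommutator φ H B :=
      (actCommutator φ H B).inv_mem (Subgroup.subset_closure ⟨c, hc, b, hb, rfl⟩)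
    have key : c⁻¹ * (h⁻¹ * φ b h) * c
        = ((h * c)⁻¹ * φ b (h * c)) * (c⁻¹ * φ b c)⁻¹ := by
      simp only [map_mul, mul_inv_rev, inv_inv]
      group
    rw [key]
    exact (actCommutator φ H B).mul_mem h1 h2
  | one => simpa using (actCommutator φ H B).one_mem
  | mul x y hx hy ihx ihy =>
    have : c⁻¹ * (x * y) * c = (c⁻¹ * x * c) * (c⁻¹ * y * c) := by group
    rw [this]
    exact (actCommutator φ H B).mul_mem ihx ihy
  | inv x hx ihx =>
    have : c⁻¹ * x⁻¹ * c = (c⁻¹ * x * c)⁻¹ := by group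
    rw [this]
    exact (actCommutator φ H B).inv_mem ihx

/-- If a finite group `A` acts by automorphisms on a finite group `G` and the
action is good, then `[H,B,B] = [H,B]` for every subgroup `B` of `A` and every `B`-invariant
subgroup `H` of `G`. -/
theorem good_action_commutator_idempotent {A G : Type*} [Group A] [Group G] [Finite A] [Finite G]
    (φ : A →* MulAut G) (hgood : IsGoodAction φ)
    (B : Subgroup A) (H : Subgroup G) (hH : ActInvariant φ B H) :
    actCommutator φ (actCommutator φ H B) B = actCommutator φ H B := by
  set K := actCommutator φ H B with hK
  have hKH : K ≤ H := actCommutator_le_aux φ B H hH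
  apply le_antisymm
  · -- [K,B] ≤ [H,B] since K ≤ H
    refine (Subgroup.closure_le _).2 ?_
    rintro x ⟨k, hk, b, hb, rfl⟩
    exact Subgroup.subset_closure ⟨k, hKH hk, b, hb, rfl⟩
  · -- [H,B] ≤ [K,B] using goodness
    refine (Subgroup.closure_le _).2 ?_
    rintro x ⟨h, hh, b, hb, rfl⟩
    have hmem : (h : G) ∈ (K : Set G) * (actCentralizerIn φ H B : Set G) := by
      rw [← hgood B H hH]; exact hh
    obtain ⟨k, hk, c, hc, hkc⟩ := hmem
    have hcH : c ∈ H := hc.1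
    have hcfix : φ b c = c := hc.2 b hb
    have hk' : c⁻¹ * k * c ∈ K := actCommutator_conj_aux φ B H c hcH k hk
    have key : h⁻¹ * φ b h = (c⁻¹ * k * c)⁻¹ * φ b (c⁻¹ * k * c) := by
      rw [← hkc]
      simp only [map_mul, map_inv, hcfix, mul_inv_rev, inv_inv]
      group
    rw [key]
    exact Subgroup.subset_closure ⟨c⁻¹ * k * c, hk', b, hb, rfl⟩
end

section
/- Let A be a finite group acting by automorphisms on a finite group G such that the action of A on G is good, let B be a subgroup of A, let N be a normal B-invariant subgroup of G, and let H be a B-invariant subgroup of G containing N. Then the fixed points of B on the quotient H/N equal the image of the fixed points: C_{H/N}(B) = C_H(B)N/N. -/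
open scoped Pointwise

/-- The subgroup of elements of `H` whose coset mod `N` is fixed by `B`. -/
def fixModSubgroup {A G : Type*} [Group A] [Group G] (φ : A →* MulAut G) (B : Subgroup A)
    (N H : Subgroup G) [N.Normal] : Subgroup G where
  carrier := {g | g ∈ H ∧ ∀ b ∈ B, g⁻¹ * φ b g ∈ N}
  one_mem' := ⟨H.one_mem, fun b _ => by simpa using N.one_mem⟩
  mul_mem' := by
    rintro x y ⟨hxH, hx⟩ ⟨hyH, hy⟩
    refine ⟨H.mul_mem hxH hyH, fun b hb => ?_⟩
    have key : (x * y)⁻¹ * φ b (x * y)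
        = (y⁻¹ * (x⁻¹ * φ b x) * y⁻¹⁻¹) * (y⁻¹ * φ b y) := by
      rw [map_mul]; group
    rw [key]
    exact N.mul_mem (Subgroup.Normal.conj_mem ‹N.Normal› _ (hx b hb) y⁻¹) (hy b hb)
  inv_mem' := by
    rintro x ⟨hxH, hx⟩
    refine ⟨H.inv_mem hxH, fun b hb => ?_⟩
    have key : x⁻¹⁻¹ * φ b x⁻¹ = x * (x⁻¹ * φ b x)⁻¹ * x⁻¹ := by
      rw [map_inv]; group
    rw [key]
    exact Subgroup.Normal.conj_mem ‹N.Normal› _ (N.inv_mem (hx b hb)) x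

/-- If a finite group `A` acts by automorphisms on a finite group `G` and the
action is good, `B ≤ A`, `N` is a normal `B`-invariant subgroup of `G` and `H` is a
`B`-invariant subgroup of `G` containing `N`, then `C_{H/N}(B) = C_H(B)N/N`: a coset
`hN ∈ H/N` is fixed by `B` (under the induced action) iff `h ∈ C_H(B)·N`. -/
theorem good_action_fixed_points_quotient {A G : Type*} [Group A] [Group G] [Finite A] [Finite G]
    (φ : A →* MulAut G) (hgood : IsGoodAction φ)
    (B : Subgroup A) (N : Subgroup G) [N.Normal] (hN : ActInvariant φ B N)
    (H : Subgroup G) (hNH : N ≤ H) (hH : ActInvariant φ B H) :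
    ∀ h ∈ H,
      ((∀ b ∈ B, (QuotientGroup.mk (φ b h) : G ⧸ N) = QuotientGroup.mk h) ↔
        ∃ c ∈ actCentralizerIn φ H B, ∃ n ∈ N, h = c * n) := by
  intro h hh
  constructor
  · intro hfix
    set K : Subgroup G := fixModSubgroup φ B N H
    have hKmem : h ∈ K := by
      refine ⟨hh, fun b hb => ?_⟩
      have := (QuotientGroup.eq (s := N)).mp (hfix b hb).symm
      simpa using this
    have hKinv : ActInvariant φ B K := by
      rintro b hb k ⟨hkH, hk⟩
      refine ⟨hH b hb k hkH, fun b' hb' => ?_⟩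
      have hbb : b⁻¹ * b' * b ∈ B := B.mul_mem (B.mul_mem (B.inv_mem hb) hb') hb
      have key : (φ b k)⁻¹ * φ b' (φ b k) = φ b (k⁻¹ * φ (b⁻¹ * b' * b) k) := by
        simp [map_mul, map_inv, MulAut.mul_apply]
      rw [key]
      exact hN b hb _ (hk _ hbb)
    have hgK := hgood B K hKinv
    have : h ∈ (actCommutator φ K B : Set G) * (actCentralizerIn φ K B : Set G) := by
      rw [← hgK]; exact hKmem
    obtain ⟨u, hu, c, hc, huc⟩ := this
    have hcomm_le : actCommutator φ K B ≤ N := by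
      apply Subgroup.closure_le N |>.mpr
      rintro x ⟨k, hk, b, hb, rfl⟩
      exact hk.2 b hb
    have huN : u ∈ N := hcomm_le hu
    obtain ⟨hcK, hcFix⟩ := hc
    refine ⟨c, ⟨hcK.1, hcFix⟩, c⁻¹ * u * c, ?_, ?_⟩
    · simpa using Subgroup.Normal.conj_mem ‹N.Normal› _ huN c⁻¹
    · rw [← huc]; group
  · rintro ⟨c, ⟨hcH, hcFix⟩, n, hn, rfl⟩
    intro b hb
    rw [QuotientGroup.eq]
    have : (φ b (c * n))⁻¹ * (c * n) = (φ b n)⁻¹ * n := by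
      rw [map_mul, hcFix b hb]; group
    rw [this]
    exact N.mul_mem (N.inv_mem (hN b hb n hn)) hn
end

section
/- Let G and A be finite solvable groups, with A acting on G by automorphisms, and form the semidirect product GA. If gcd(|[G,A]|, |GA/[G,A]|) = 1, then the action of A on G is good. -/
open scoped Pointwise

section Aux

variable {Δ Γ : Type*} [Group Δ] [Group Γ]

theorem mem_actCommutator_gen (ψ : Δ →* MulAut Γ) (x : Γ) (d : Δ) :
    x⁻¹ * ψ d x ∈ actCommutator ψ ⊤ ⊤ :=
  Subgroup.subset_closure ⟨x, trivial, d, trivial, rfl⟩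

theorem actCommutator_top_normal (ψ : Δ →* MulAut Γ) : (actCommutator ψ ⊤ ⊤).Normal := by
  set S : Set Γ := {x | ∃ h ∈ (⊤ : Subgroup Γ), ∃ b ∈ (⊤ : Subgroup Δ), x = h⁻¹ * ψ b h} with hS
  constructor
  intro n hn g
  have key : ∀ s ∈ S, g * s * g⁻¹ ∈ actCommutator ψ ⊤ ⊤ := by
    rintro s ⟨h, -, b, -, rfl⟩
    have h1 := mem_actCommutator_gen ψ (h * g⁻¹) b
    have h2 := mem_actCommutator_gen ψ g⁻¹ b
    have heq : g * (h⁻¹ * ψ b h) * g⁻¹ =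
        ((h * g⁻¹)⁻¹ * ψ b (h * g⁻¹)) * ((g⁻¹)⁻¹ * ψ b g⁻¹)⁻¹ := by
      simp only [map_mul, map_inv]
      group
    rw [heq]
    exact mul_mem h1 (inv_mem h2)
  have : g * n * g⁻¹ = (MulAut.conj g).toMonoidHom n := by simp [MulAut.conj]
  rw [this]
  have hmap : (actCommutator ψ ⊤ ⊤).map (MulAut.conj g).toMonoidHom ≤ actCommutator ψ ⊤ ⊤ := by
    have hrw : (actCommutator ψ ⊤ ⊤).map (MulAut.conj g).toMonoidHom
        = Subgroup.closure ((MulAut.conj g).toMonoidHom '' S) := by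
      rw [actCommutator, MonoidHom.map_closure]
    rw [hrw, Subgroup.closure_le]
    rintro y ⟨s, hs, rfl⟩
    simpa [MulAut.conj] using key s hs
  exact hmap (Subgroup.mem_map_of_mem _ hn)

theorem actCommutator_top_inv (ψ : Δ →* MulAut Γ) (d : Δ) :
    ∀ g ∈ actCommutator ψ ⊤ ⊤, ψ d g ∈ actCommutator ψ ⊤ ⊤ := by
  intro g hg
  have hmap : (actCommutator ψ ⊤ ⊤).map (ψ d).toMonoidHom ≤ actCommutator ψ ⊤ ⊤ := by
    have hrw : (actCommutator ψ ⊤ ⊤).map (ψ d).toMonoidHom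
        = Subgroup.closure ((ψ d).toMonoidHom ''
            {x | ∃ h ∈ (⊤ : Subgroup Γ), ∃ b ∈ (⊤ : Subgroup Δ), x = h⁻¹ * ψ b h}) := by
      rw [actCommutator, MonoidHom.map_closure]
    rw [hrw, Subgroup.closure_le]
    rintro y ⟨s, ⟨h, -, b, -, rfl⟩, rfl⟩
    have hcomp : ψ (d * b * d⁻¹) (ψ d h) = ψ d (ψ b h) := by
      have h2 : d * b * d⁻¹ * d = d * b := by group
      rw [← MulAut.mul_apply, ← map_mul, h2, map_mul, MulAut.mul_apply]
    have hkey : (ψ d).toMonoidHom (h⁻¹ * ψ b h) = (ψ d h)⁻¹ * ψ (d * b * d⁻¹) (ψ d h) := by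
      rw [hcomp]
      simp only [MulEquiv.coe_toMonoidHom, map_mul, map_inv]
    rw [hkey]
    exact Subgroup.subset_closure ⟨ψ d h, trivial, d * b * d⁻¹, trivial, rfl⟩
  exact hmap (Subgroup.mem_map_of_mem _ hg)

end Aux

universe u v

theorem lift_fixed :
    ∀ (n : ℕ) {Γ : Type u} {Δ : Type v} [Group Γ] [Group Δ] [Finite Γ] [Finite Δ]
      (ψ : Δ →* MulAut Γ) (N : Subgroup Γ), N.Normal →
      (∀ d : Δ, ∀ g ∈ N, ψ d g ∈ N) → Group.IsSolvable ↥N →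
      Nat.Coprime (Nat.card ↥N) (Nat.card Δ) → Nat.card ↥N ≤ n →
      ∀ x : Γ, (∀ d, x⁻¹ * ψ d x ∈ N) →
      ∃ c : Γ, (∀ d, ψ d c = c) ∧ x⁻¹ * c ∈ N := by
  intro n
  induction n using Nat.strong_induction_on with
  | _ n IH =>
  intro Γ Δ _ _ _ _ ψ N hNnorm hinv hNsolv hcop hcard x hx
  rcases eq_or_ne N ⊥ with rfl | hNbot
  · exact ⟨x, fun d => (inv_mul_eq_one.mp (Subgroup.mem_bot.mp (hx d))).symm, by simp⟩
  by_cases habel : ⁅N, N⁆ = ⊥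
  · -- abelian case
    have hcomm : ∀ a b : ↥N, a * b = b * a := by
      intro a b
      have ha := Subgroup.commutator_eq_bot_iff_le_centralizer.mp habel a.2
      have hab := Subgroup.mem_centralizer_iff.mp ha (b : Γ) b.2
      exact Subtype.ext hab.symm
    letI : CommGroup ↥N := { (inferInstance : Group ↥N) with mul_comm := hcomm }
    haveI : Fintype Δ := Fintype.ofFinite Δ
    have hEfin : Nat.card Δ = Fintype.card Δ := Nat.card_eq_fintype_card
    set E := Nat.card Δ with hE
    let nn : Δ → ↥N := fun d => ⟨x⁻¹ * ψ d x, hx d⟩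
    let ν : Δ → (↥N →* ↥N) := fun d =>
      { toFun := fun m => ⟨ψ d (m : Γ), hinv d (m : Γ) m.2⟩
        map_one' := Subtype.ext (by simp)
        map_mul' := fun a b => Subtype.ext (by simp) }
    have hcocycle : ∀ d e : Δ, ν d (nn e) = (nn d)⁻¹ * nn (d * e) := by
      intro d e
      apply Subtype.ext
      show ψ d (x⁻¹ * ψ e x) = ((x⁻¹ * ψ d x)⁻¹ * (x⁻¹ * ψ (d * e) x) : Γ)
      have h1 : ψ (d * e) x = ψ d (ψ e x) := by rw [map_mul, MulAut.mul_apply]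
      rw [map_mul, map_inv, h1]
      group
    set m : ↥N := ∏ e : Δ, nn e with hm_def
    have hm : ∀ d, ν d m = ((nn d)⁻¹) ^ E * m := by
      intro d
      have h1 : ν d m = ∏ e : Δ, ν d (nn e) := map_prod (ν d) nn Finset.univ
      rw [h1]
      calc (∏ e : Δ, ν d (nn e))
          = ∏ e : Δ, ((nn d)⁻¹ * nn (d * e)) :=
            Finset.prod_congr rfl (fun e _ => hcocycle d e)
        _ = (∏ _e : Δ, (nn d)⁻¹) * ∏ e : Δ, nn (d * e) := Finset.prod_mul_distrib
        _ = ((nn d)⁻¹) ^ E * m := by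
            rw [Finset.prod_const, Finset.card_univ, ← hEfin]
            congr 1
            exact Equiv.prod_comp (Equiv.mulLeft d) nn
    have h1N : 1 < Nat.card ↥N := N.one_lt_card_iff_ne_bot.mpr hNbot
    obtain ⟨k, -, hk⟩ := Nat.exists_mul_mod_eq_one_of_coprime hcop.symm h1N
    set u : ↥N := m ^ k with hu_def
    have hpow : ∀ g : ↥N, g ^ (E * k) = g := by
      intro g
      conv_rhs => rw [← pow_one g]
      rw [pow_eq_pow_mod (E * k) (pow_card_eq_one' (G := ↥N) (x := g)), hk]
    have hnuu : ∀ d, ν d u = (nn d)⁻¹ * u := by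
      intro d
      rw [hu_def, map_pow, hm d, mul_pow, ← pow_mul, hpow]
    have hufix : ∀ d, ψ d (x * (u : Γ)) = x * (u : Γ) := by
      intro d
      rw [map_mul]
      have h2 : ψ d (u : Γ) = ((ν d u : ↥N) : Γ) := rfl
      rw [h2, hnuu d]
      have h3 : ψ d x = x * ((nn d : ↥N) : Γ) := by
        show ψ d x = x * (x⁻¹ * ψ d x)
        group
      rw [h3]
      push_cast
      group
    exact ⟨x * (u : Γ), hufix, by simpa using u.2⟩
  · -- nonabelian case
    haveI := hNnorm
    set N' : Subgroup Γ := ⁅N, N⁆ with hN'def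
    haveI hN'norm : N'.Normal := Subgroup.commutator_normal N N
    have hN'le : N' ≤ N := Subgroup.commutator_le_right N N
    have hN'ne : N' ≠ N := by
      intro hEq
      have hmapk : ∀ k : ℕ, Subgroup.map N.subtype (derivedSeries ↥N k) = N := by
        intro k
        induction k with
        | zero =>
          rw [derivedSeries_zero, ← MonoidHom.range_eq_map]
          exact N.range_subtype
        | succ k ih =>
          rw [derivedSeries_succ, Subgroup.map_commutator, ih]
          exact hEq
      obtain ⟨k, hk⟩ := hNsolv.solvable
      have hbad := hmapk k
      rw [hk] at hbad
      simp only [Subgroup.map_bot] at hbad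
      exact hNbot hbad.symm
    have hcardN'lt : Nat.card ↥N' < Nat.card ↥N := by
      have hlt : N' < N := lt_of_le_of_ne hN'le hN'ne
      set N'' := N'.subgroupOf N with hN''
      have hcards : Nat.card ↥N'' = Nat.card ↥N' :=
        Nat.card_congr (Subgroup.subgroupOfEquivOfLe hN'le).toEquiv
      have hne_top : N'' ≠ ⊤ := by
        obtain ⟨g, hgN, hgN'⟩ := SetLike.exists_of_lt hlt
        intro htop
        have hmem : (⟨g, hgN⟩ : ↥N) ∈ N'' := htop ▸ Subgroup.mem_top _
        exact hgN' (Subgroup.mem_subgroupOf.mp hmem)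
      have hidx : 1 < N''.index := by
        have h0 : N''.index ≠ 0 := Subgroup.index_ne_zero_of_finite
        have h1 : N''.index ≠ 1 := fun h => hne_top (Subgroup.index_eq_one.mp h)
        omega
      calc Nat.card ↥N' = Nat.card ↥N'' := hcards.symm
        _ < Nat.card ↥N'' * N''.index :=
            lt_mul_of_one_lt_right Nat.card_pos hidx
        _ = Nat.card ↥N := Subgroup.card_mul_index N''
    have hmapNd : ∀ d : Δ, N.map (ψ d).toMonoidHom = N := by
      intro d
      apply le_antisymm
      · rintro _ ⟨g, hg, rfl⟩
        exact hinv d g hg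
      · intro g hg
        refine ⟨ψ d⁻¹ g, hinv d⁻¹ g hg, ?_⟩
        show ψ d (ψ d⁻¹ g) = g
        rw [← MulAut.mul_apply, ← map_mul, mul_inv_cancel, map_one, MulAut.one_apply]
    have hmapN'd : ∀ d : Δ, N'.map (ψ d).toMonoidHom = N' := by
      intro d
      rw [hN'def, Subgroup.map_commutator, hmapNd d]
    let ψQ : Δ →* MulAut (Γ ⧸ N') :=
      { toFun := fun d => QuotientGroup.congr N' N' (ψ d) (hmapN'd d)
        map_one' := by
          ext q
          refine QuotientGroup.induction_on q (fun g => ?_)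
          simp [QuotientGroup.congr_mk]
        map_mul' := fun d e => by
          ext q
          refine QuotientGroup.induction_on q (fun g => ?_)
          simp [QuotientGroup.congr_mk, map_mul, MulAut.mul_apply]; rfl }
    have hψQmk : ∀ (d : Δ) (g : Γ),
        ψQ d ((QuotientGroup.mk' N') g) = (QuotientGroup.mk' N') (ψ d g) := fun d g => rfl
    set NQ : Subgroup (Γ ⧸ N') := N.map (QuotientGroup.mk' N') with hNQdef
    haveI hNQnorm : NQ.Normal := Subgroup.Normal.map hNnorm _ (QuotientGroup.mk'_surjective N')
    have hinvQ : ∀ d : Δ, ∀ q ∈ NQ, ψQ d q ∈ NQ := by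
      rintro d q ⟨g, hg, rfl⟩
      exact ⟨ψ d g, hinv d g hg, (hψQmk d g).symm⟩
    haveI := hNsolv
    have hsurj : Function.Surjective ((QuotientGroup.mk' N').subgroupMap N) :=
      (QuotientGroup.mk' N').subgroupMap_surjective N
    haveI hNQsolv : Group.IsSolvable ↥NQ := solvable_of_surjective hsurj
    have hcardNQdvd : Nat.card ↥NQ ∣ Nat.card ↥N := Subgroup.card_dvd_of_surjective _ hsurj
    have hcardNQlt : Nat.card ↥NQ < Nat.card ↥N := by
      set f := (QuotientGroup.mk' N').subgroupMap N with hf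
      have hkerne : f.ker ≠ ⊥ := by
        have hN'bot : N' ≠ ⊥ := habel
        obtain ⟨a, ha1⟩ := Subgroup.ne_bot_iff_exists_ne_one.mp hN'bot
        intro hbot
        have hmem : (⟨(a : Γ), hN'le a.2⟩ : ↥N) ∈ f.ker := by
          rw [MonoidHom.mem_ker]
          apply Subtype.ext
          show (QuotientGroup.mk' N') (a : Γ) = 1
          exact (QuotientGroup.eq_one_iff _).mpr a.2
        rw [hbot, Subgroup.mem_bot] at hmem
        have hval : (a : Γ) = 1 := congrArg Subtype.val hmem
        exact ha1 (Subtype.ext hval)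
      have hker1 : 1 < Nat.card f.ker := f.ker.one_lt_card_iff_ne_bot.mpr hkerne
      have hrange : f.range = ⊤ := MonoidHom.range_eq_top.mpr hsurj
      have hcard_eq : Nat.card ↥NQ * Nat.card f.ker = Nat.card ↥N := by
        have h1 := Subgroup.card_mul_index f.ker
        have h2 : f.ker.index = Nat.card ↥NQ := by
          rw [Subgroup.index_ker, hrange]
          exact Nat.card_congr Subgroup.topEquiv.toEquiv
        rw [← h1, h2, mul_comm]
      calc Nat.card ↥NQ = Nat.card ↥NQ * 1 := (mul_one _).symm
        _ < Nat.card ↥NQ * Nat.card f.ker := mul_lt_mul_of_pos_left hker1 Nat.card_pos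
        _ = Nat.card ↥N := hcard_eq
    have hcopQ : Nat.Coprime (Nat.card ↥NQ) (Nat.card Δ) :=
      Nat.Coprime.coprime_dvd_left hcardNQdvd hcop
    have hxQ : ∀ d, ((QuotientGroup.mk' N') x)⁻¹ * ψQ d ((QuotientGroup.mk' N') x) ∈ NQ := by
      intro d
      rw [hψQmk, ← map_inv, ← map_mul]
      exact Subgroup.mem_map_of_mem _ (hx d)
    obtain ⟨cQ, hcQfix, hcQmem⟩ := IH (Nat.card ↥NQ) (lt_of_lt_of_le hcardNQlt hcard)
      ψQ NQ hNQnorm hinvQ hNQsolv hcopQ le_rfl ((QuotientGroup.mk' N') x) hxQ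
    obtain ⟨y, rfl⟩ := QuotientGroup.mk'_surjective N' cQ
    have hxyN : x⁻¹ * y ∈ N := by
      rw [← map_inv, ← map_mul] at hcQmem
      obtain ⟨z, hz, hzeq⟩ := hcQmem
      obtain ⟨t, htN', hteq⟩ := (QuotientGroup.mk'_eq_mk' N').mp hzeq
      rw [← hteq]
      exact mul_mem hz (hN'le htN')
    have hyfix : ∀ d, y⁻¹ * ψ d y ∈ N' := by
      intro d
      have hfd := hcQfix d
      rw [hψQmk] at hfd
      obtain ⟨t, htN', hteq⟩ := (QuotientGroup.mk'_eq_mk' N').mp hfd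
      have ht : t = (ψ d y)⁻¹ * y := eq_inv_mul_of_mul_eq hteq
      have h2 : (ψ d y)⁻¹ * y ∈ N' := ht ▸ htN'
      have h3 := inv_mem h2
      rwa [mul_inv_rev, inv_inv] at h3
    have hinv' : ∀ d : Δ, ∀ g ∈ N', ψ d g ∈ N' := by
      intro d g hg
      rw [← hmapN'd d]
      exact Subgroup.mem_map_of_mem _ hg
    have hsolv' : Group.IsSolvable ↥N' :=
      solvable_of_solvable_injective (Subgroup.inclusion_injective hN'le)
    obtain ⟨c, hcfix, hcmem⟩ := IH (Nat.card ↥N') (lt_of_lt_of_le hcardN'lt hcard)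
      ψ N' hN'norm hinv' hsolv'
      (Nat.Coprime.coprime_dvd_left (Subgroup.card_dvd_of_le hN'le) hcop) le_rfl y hyfix
    refine ⟨c, hcfix, ?_⟩
    have hsplit : x⁻¹ * c = (x⁻¹ * y) * (y⁻¹ * c) := by group
    rw [hsplit]
    exact mul_mem hxyN (hN'le hcmem)

section Restrict

variable {A G : Type*} [Group A] [Group G]

def restrictAction (φ : A →* MulAut G) (B : Subgroup A) (H : Subgroup G)
    (hinv : ActInvariant φ B H) : ↥B →* MulAut ↥H where
  toFun b :=
    { toFun := fun h => ⟨φ (b : A) (h : G), hinv b b.2 h h.2⟩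
      invFun := fun h => ⟨φ ((b : A))⁻¹ (h : G), hinv ((b : A))⁻¹ (inv_mem b.2) h h.2⟩
      left_inv := fun h => Subtype.ext (by
        show φ ((b : A))⁻¹ (φ (b : A) h) = (h : G)
        rw [← MulAut.mul_apply, ← map_mul, inv_mul_cancel, map_one, MulAut.one_apply])
      right_inv := fun h => Subtype.ext (by
        show φ (b : A) (φ ((b : A))⁻¹ h) = (h : G)
        rw [← MulAut.mul_apply, ← map_mul, mul_inv_cancel, map_one, MulAut.one_apply])
      map_mul' := fun a b' => Subtype.ext (map_mul _ _ _) }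
  map_one' := by
    ext h
    simp
  map_mul' := fun a b => by
    ext h
    show φ ((a * b : ↥B) : A) (h : G) = _
    push_cast
    rw [map_mul, MulAut.mul_apply]
    rfl

end Restrict


/-- Let `G` and `A` be finite solvable groups, `A` acting on `G` via `φ`, and
form the semidirect product `GA = G ⋊[φ] A`.  If `gcd(|[G,A]|, |GA/[G,A]|) = 1`
(where `|GA/[G,A]|` is the index of `[G,A]` in `GA`), then the action of `A` on `G` is good. -/
theorem good_action_of_coprime_commutator {A G : Type*} [Group A] [Group G] [Finite A] [Finite G]
    [Group.IsSolvable G] [Group.IsSolvable A] (φ : A →* MulAut G)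
    (hcop : Nat.Coprime (Nat.card ↥(actCommutator φ ⊤ ⊤))
      (((actCommutator φ ⊤ ⊤).map (SemidirectProduct.inl : G →* G ⋊[φ] A)).index)) :
    IsGoodAction φ := by
  intro B H hHinv
  classical
  set ψ := restrictAction φ B H hHinv with hψdef
  set NH : Subgroup ↥H := actCommutator ψ ⊤ ⊤ with hNHdef
  haveI hNHnorm : NH.Normal := actCommutator_top_normal ψ
  have hmapNH : NH.map H.subtype = actCommutator φ H B := by
    rw [hNHdef, actCommutator, actCommutator, MonoidHom.map_closure]
    congr 1
    ext g
    constructor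
    · rintro ⟨xh, ⟨h, -, b, -, rfl⟩, rfl⟩
      exact ⟨(h : G), h.2, (b : A), b.2, rfl⟩
    · rintro ⟨h, hh, b, hb, rfl⟩
      exact ⟨(⟨h, hh⟩ : ↥H)⁻¹ * ψ ⟨b, hb⟩ ⟨h, hh⟩,
        ⟨⟨h, hh⟩, trivial, ⟨b, hb⟩, trivial, rfl⟩, rfl⟩
  have hNle : actCommutator φ H B ≤ H := by
    rw [actCommutator, Subgroup.closure_le]
    rintro g ⟨h, hh, b, hb, rfl⟩
    exact H.mul_mem (H.inv_mem hh) (hHinv b hb h hh)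
  have hle_full : actCommutator φ H B ≤ actCommutator φ ⊤ ⊤ :=
    Subgroup.closure_mono (by rintro g ⟨h, hh, b, hb, rfl⟩; exact ⟨h, trivial, b, trivial, rfl⟩)
  have hcardNH : Nat.card ↥NH = Nat.card ↥(actCommutator φ H B) := by
    rw [← hmapNH]
    exact Nat.card_congr (Subgroup.equivMapOfInjective NH H.subtype H.subtype_injective).toEquiv
  have hdvd1 : Nat.card ↥NH ∣ Nat.card ↥(actCommutator φ ⊤ ⊤) := by
    rw [hcardNH]; exact Subgroup.card_dvd_of_le hle_full
  have hAdvd : Nat.card A ∣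
      ((actCommutator φ ⊤ ⊤).map (SemidirectProduct.inl : G →* G ⋊[φ] A)).index := by
    set Nfull := actCommutator φ ⊤ ⊤ with hNfull
    set K := Nfull.map (SemidirectProduct.inl : G →* G ⋊[φ] A) with hKdef
    have hcardK : Nat.card ↥K = Nat.card ↥Nfull :=
      (Nat.card_congr
        (Subgroup.equivMapOfInjective Nfull _ SemidirectProduct.inl_injective).toEquiv).symm
    have hcardGA : Nat.card (G ⋊[φ] A) = Nat.card G * Nat.card A := by
      rw [← Nat.card_prod]
      exact Nat.card_congr ⟨fun x => (x.left, x.right), fun p => ⟨p.1, p.2⟩,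
        fun x => rfl, fun p => rfl⟩
    obtain ⟨q, hq⟩ := Subgroup.card_subgroup_dvd_card Nfull
    have hpos : 0 < Nat.card ↥Nfull := Nat.card_pos
    have hmul : K.index * Nat.card ↥K = (q * Nat.card A) * Nat.card ↥K := by
      rw [Subgroup.index_mul_card K, hcardGA, hq, hcardK]
      ring
    have hKidx : K.index = q * Nat.card A :=
      Nat.eq_of_mul_eq_mul_right (hcardK ▸ hpos) hmul
    rw [hKidx]
    exact dvd_mul_left _ _
  have hcop2 : Nat.Coprime (Nat.card ↥NH) (Nat.card ↥B) :=
    Nat.Coprime.coprime_dvd_left hdvd1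
      (Nat.Coprime.coprime_dvd_right
        (dvd_trans (Subgroup.card_subgroup_dvd_card B) hAdvd) hcop)
  apply Set.Subset.antisymm
  · intro x hxH
    obtain ⟨c, hcfix, hcm⟩ := lift_fixed (Nat.card ↥NH) ψ NH hNHnorm
      (fun d => actCommutator_top_inv ψ d) inferInstance hcop2 le_rfl
      (⟨x, hxH⟩ : ↥H) (fun d => mem_actCommutator_gen ψ _ d)
    set x' : ↥H := ⟨x, hxH⟩ with hx'def
    set w : ↥H := x'⁻¹ * c with hwdef
    have hm : c * w⁻¹ * c⁻¹ ∈ NH := hNHnorm.conj_mem _ (NH.inv_mem hcm) c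
    have hx'eq : x' = (c * w⁻¹ * c⁻¹) * c := by rw [hwdef]; group
    refine Set.mem_mul.mpr ⟨((c * w⁻¹ * c⁻¹ : ↥H) : G), ?_, ((c : ↥H) : G), ?_, ?_⟩
    · rw [← hmapNH]
      exact Subgroup.mem_map_of_mem _ hm
    · refine ⟨(c : ↥H).2, ?_⟩
      intro b hb
      exact congrArg Subtype.val (hcfix ⟨b, hb⟩)
    · rw [← Subgroup.coe_mul, ← hx'eq]
  · rintro g ⟨n, hn, cg, hcg, rfl⟩
    exact H.mul_mem (hNle hn) hcg.1
end

section
/- Let A be a finite group acting by automorphisms on a finite group G such that the action of A on G is good. Let p be a prime dividing |A|, let B be a p-subgroup of A, and suppose G is p-solvable. Then [G,B] is a p′-group, i.e., p does not divide |[G,B]|. -/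
open scoped Pointwise

/-- `G` is `p`-solvable: it has a normal series each of whose quotients is either a
`p`-group or a `p'`-group. -/
def IsPSolvableGroup (p : ℕ) (G : Type*) [Group G] : Prop :=
  ∃ n : ℕ, ∃ s : Fin (n + 1) → Subgroup G,
    s 0 = ⊥ ∧ s (Fin.last n) = ⊤ ∧
    (∀ i, (s i).Normal) ∧
    (∀ i : Fin n, s i.castSucc ≤ s i.succ) ∧
    (∀ i : Fin n,
      (∃ k : ℕ, (s i.castSucc).relIndex (s i.succ) = p ^ k) ∨
        ¬ p ∣ (s i.castSucc).relIndex (s i.succ))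


section Basics

variable {A G : Type*} [Group A] [Group G] (φ : A →* MulAut G)

lemma gen_mem_actCommutator {H : Subgroup G} {B : Subgroup A} {h : G} {b : A}
    (hh : h ∈ H) (hb : b ∈ B) : h⁻¹ * φ b h ∈ actCommutator φ H B :=
  Subgroup.subset_closure ⟨h, hh, b, hb, rfl⟩

lemma actCommutator_le {H : Subgroup G} {B : Subgroup A} (hinv : ActInvariant φ B H) :
    actCommutator φ H B ≤ H := by
  apply Subgroup.closure_le _ |>.2
  rintro x ⟨h, hh, b, hb, rfl⟩
  exact mul_mem (inv_mem hh) (hinv b hb h hh)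

lemma actCommutator_mono {H K : Subgroup G} {B : Subgroup A} (hHK : H ≤ K) :
    actCommutator φ H B ≤ actCommutator φ K B := by
  apply Subgroup.closure_mono
  rintro x ⟨h, hh, b, hb, rfl⟩
  exact ⟨h, hHK hh, b, hb, rfl⟩

lemma actCommutator_invariant {H : Subgroup G} {B : Subgroup A} (hinv : ActInvariant φ B H) :
    ActInvariant φ B (actCommutator φ H B) := by
  intro b hb h hh
  have : (actCommutator φ H B).map (φ b).toMonoidHom ≤ actCommutator φ H B := by
    rw [actCommutator, MonoidHom.map_closure]
    apply Subgroup.closure_le _ |>.2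
    rintro x ⟨y, ⟨h₁, hh₁, b₁, hb₁, rfl⟩, rfl⟩
    simp only [MulEquiv.coe_toMonoidHom, map_mul, map_inv]
    refine Subgroup.subset_closure ⟨φ b h₁, hinv b hb h₁ hh₁, b * b₁ * b⁻¹, mul_mem (mul_mem hb hb₁) (inv_mem hb), ?_⟩
    have e : ∀ a c : A, ∀ x : G, φ (a * c) x = φ a (φ c x) := fun a c x => by
      rw [map_mul]; rfl
    congr 1
    rw [e (b*b₁) b⁻¹, ← e b⁻¹ b, inv_mul_cancel, map_one, MulAut.one_apply, e]
  exact this ⟨h, hh, rfl⟩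

lemma phi_mul_apply (a c : A) (x : G) : φ (a * c) x = φ a (φ c x) := by
  rw [map_mul]; rfl

lemma actCommutator_conj_mem {H : Subgroup G} {B : Subgroup A} {c : G}
    (hcH : c ∈ H) (hcfix : ∀ b ∈ B, φ b c = c) {x : G}
    (hx : x ∈ actCommutator φ H B) : c⁻¹ * x * c ∈ actCommutator φ H B := by
  induction hx using Subgroup.closure_induction with
  | mem y hy =>
    obtain ⟨h₁, hh₁, b₁, hb₁, rfl⟩ := hy
    refine Subgroup.subset_closure ⟨h₁ * c, mul_mem hh₁ hcH, b₁, hb₁, ?_⟩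
    rw [map_mul, hcfix b₁ hb₁]
    group
  | one => simpa using one_mem _
  | mul y z _ _ hy hz =>
    have : c⁻¹ * (y * z) * c = (c⁻¹ * y * c) * (c⁻¹ * z * c) := by group
    rw [this]; exact mul_mem hy hz
  | inv y _ hy =>
    have : c⁻¹ * y⁻¹ * c = (c⁻¹ * y * c)⁻¹ := by group
    rw [this]; exact inv_mem hy

/-- Key consequence of goodness : `[H,B] = [[H,B],B]`. -/
lemma actCommutator_idem (hgood : IsGoodAction φ) {H : Subgroup G} {B : Subgroup A}
    (hinv : ActInvariant φ B H) :
    actCommutator φ H B = actCommutator φ (actCommutator φ H B) B := by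
  refine le_antisymm ?_ (actCommutator_mono φ (actCommutator_le φ hinv))
  apply (Subgroup.closure_le _).2
  rintro x ⟨h, hh, b, hb, rfl⟩
  have hmem : h ∈ (actCommutator φ H B : Set G) * (actCentralizerIn φ H B : Set G) := by
    rw [← hgood B H hinv]; exact hh
  obtain ⟨y, hy, c, hc, rfl⟩ := hmem
  obtain ⟨hcH, hcfix⟩ := hc
  have hcfix' : ∀ b' ∈ B, φ b' c = c := hcfix
  have hw : c⁻¹ * y * c ∈ actCommutator φ H B := actCommutator_conj_mem φ hcH hcfix' hy
  have key : (y * c)⁻¹ * φ b (y * c) = (c⁻¹ * y * c)⁻¹ * φ b (c⁻¹ * y * c) := by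
    rw [map_mul, map_mul, map_mul, map_inv, hcfix' b hb]
    group
  rw [key]
  exact gen_mem_actCommutator φ hw hb

end Basics


section Crux

variable {A G : Type*} [Group A] [Group G] (φ : A →* MulAut G)

open scoped commutatorElement

/-- Restriction of the action to an invariant subgroup, as an action of `↥B` on `↥H`. -/
def restrictAut {H : Subgroup G} {B : Subgroup A} (hinv : ActInvariant φ B H) :
    ↥B →* MulAut ↥H where
  toFun b :=
    { toFun := fun h => ⟨φ b h, hinv b b.2 h h.2⟩
      invFun := fun h => ⟨φ (b : A)⁻¹ h, hinv (b : A)⁻¹ (inv_mem b.2) h h.2⟩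
      left_inv := fun h => Subtype.ext (by
        simp only [← phi_mul_apply, inv_mul_cancel, map_one, MulAut.one_apply])
      right_inv := fun h => Subtype.ext (by
        simp only [← phi_mul_apply, mul_inv_cancel, map_one, MulAut.one_apply])
      map_mul' := fun x y => Subtype.ext (map_mul (φ (b : A)) (x : G) (y : G)) }
  map_one' := by
    ext h
    simp [MulAut.one_apply]
  map_mul' := fun a b => by
    ext h
    exact phi_mul_apply φ a b h

lemma restrictAut_apply {H : Subgroup G} {B : Subgroup A} (hinv : ActInvariant φ B H)
    (b : ↥B) (h : ↥H) : ((restrictAut φ hinv b h : ↥H) : G) = φ b.1 h.1 := rfl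

/-- In a nilpotent setting: if `H` is a `B`-invariant `p`-subgroup with `H ≤ [H,B]`,
and `B` is a `p`-group, then `H` is trivial. -/
lemma crux_pgroup [Finite A] [Finite G] {p : ℕ} (hp : p.Prime)
    {H : Subgroup G} {B : Subgroup A} (hinv : ActInvariant φ B H)
    (hHp : IsPGroup p ↥H) (hBp : IsPGroup p ↥B)
    (hle : H ≤ actCommutator φ H B) : H = ⊥ := by
  haveI : Fact p.Prime := ⟨hp⟩
  set ρ := restrictAut φ hinv with hρ
  let S := SemidirectProduct ↥H ↥B ρ
  have hfin : Finite S := by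
    refine Finite.of_injective (fun x : S => (x.left, x.right)) ?_
    intro x y hxy
    cases x; cases y
    simp only [Prod.mk.injEq] at hxy
    simp [SemidirectProduct.ext_iff, hxy.1, hxy.2]
  have e : S ≃ ↥H × ↥B := by
    refine ⟨fun x : S => (x.left, x.right), fun z => ⟨z.1, z.2⟩, ?_, ?_⟩
    · intro x; cases x; rfl
    · intro z; cases z; rfl
  have hcard : Nat.card S = Nat.card ↥H * Nat.card ↥B := by
    rw [Nat.card_congr e, Nat.card_prod]
  obtain ⟨a, ha⟩ := hHp.exists_card_eq
  obtain ⟨b, hb⟩ := hBp.exists_card_eq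
  have hSp : IsPGroup p S := IsPGroup.of_card (by rw [hcard, ha, hb, ← pow_add])
  have hnil : Group.IsNilpotent S := hSp.isNilpotent
  have main : ∀ m : ℕ, ∀ h : ↥H, (SemidirectProduct.inl h : S) ∈ Subgroup.lowerCentralSeries (⊤ : Subgroup S) m := by
    intro m
    induction m with
    | zero => intro h; simp [lowerCentralSeries]
    | succ m ih =>
      intro h
      have gen : ∀ x : G, x ∈ actCommutator φ H B → ∃ hxH : x ∈ H,
          (SemidirectProduct.inl (⟨x, hxH⟩ : ↥H) : S) ∈ Subgroup.lowerCentralSeries (⊤ : Subgroup S) (m + 1) := by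
        intro x hx
        induction hx using Subgroup.closure_induction with
        | mem y hy =>
          obtain ⟨h₁, hh₁, b₁, hb₁, rfl⟩ := hy
          have hgenH : h₁⁻¹ * φ b₁ h₁ ∈ H := mul_mem (inv_mem hh₁) (hinv b₁ hb₁ h₁ hh₁)
          refine ⟨hgenH, ?_⟩
          have comm : ∀ (n : ↥H) (c : ↥B),
              ⁅(SemidirectProduct.inl n : S), (SemidirectProduct.inr c : S)⁆
              = SemidirectProduct.inl (n * ρ c n⁻¹) := by
            intro n c
            have h1 : (SemidirectProduct.inl (ρ c n⁻¹) : S)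
                = (SemidirectProduct.inr c : S) * SemidirectProduct.inl n⁻¹
                  * (SemidirectProduct.inr c : S)⁻¹ := by
              rw [SemidirectProduct.inl_aut]
              simp [map_inv]
            rw [commutatorElement_def]
            calc (SemidirectProduct.inl n : S) * SemidirectProduct.inr c
                  * (SemidirectProduct.inl n : S)⁻¹ * (SemidirectProduct.inr c : S)⁻¹
                = SemidirectProduct.inl n * ((SemidirectProduct.inr c : S)
                    * SemidirectProduct.inl n⁻¹ * (SemidirectProduct.inr c : S)⁻¹) := by
                  rw [map_inv]; group
              _ = SemidirectProduct.inl n * SemidirectProduct.inl (ρ c n⁻¹) := by rw [h1]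
              _ = SemidirectProduct.inl (n * ρ c n⁻¹) := (map_mul _ _ _).symm
          have key : (SemidirectProduct.inl (⟨h₁⁻¹ * φ b₁ h₁, hgenH⟩ : ↥H) : S) =
              ⁅(SemidirectProduct.inl ((⟨h₁, hh₁⟩ : ↥H)⁻¹) : S),
                (SemidirectProduct.inr (⟨b₁, hb₁⟩ : ↥B) : S)⁆ := by
            rw [comm]
            congr 1
            apply Subtype.ext
            show h₁⁻¹ * φ b₁ h₁ = _
            rw [inv_inv]
            rfl
          rw [key, lowerCentralSeries_succ]
          exact Subgroup.commutator_mem_commutator (ih _) (Subgroup.mem_top _)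
        | one => exact ⟨one_mem _, by rw [show (⟨1, one_mem H⟩ : ↥H) = 1 from rfl, map_one]; exact one_mem _⟩
        | mul y z hy hz ihy ihz =>
          obtain ⟨hyH, hy'⟩ := ihy
          obtain ⟨hzH, hz'⟩ := ihz
          refine ⟨mul_mem hyH hzH, ?_⟩
          have : (⟨y * z, mul_mem hyH hzH⟩ : ↥H) = ⟨y, hyH⟩ * ⟨z, hzH⟩ := rfl
          rw [this, map_mul]
          exact mul_mem hy' hz'
        | inv y hy ihy =>
          obtain ⟨hyH, hy'⟩ := ihy
          refine ⟨inv_mem hyH, ?_⟩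
          have : (⟨y⁻¹, inv_mem hyH⟩ : ↥H) = (⟨y, hyH⟩ : ↥H)⁻¹ := rfl
          rw [this, map_inv]
          exact inv_mem hy'
      obtain ⟨hxH, hmem⟩ := gen (h : G) (hle h.2)
      have : (⟨(h : G), hxH⟩ : ↥H) = h := Subtype.ext rfl
      rwa [this] at hmem
  obtain ⟨n, hn⟩ := nilpotent_iff_lowerCentralSeries.mp hnil
  rw [Subgroup.eq_bot_iff_forall]
  intro x hx
  have := main n ⟨x, hx⟩
  rw [hn, Subgroup.mem_bot] at this
  have : (⟨x, hx⟩ : ↥H) = 1 := SemidirectProduct.inl_injective this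
  exact congrArg Subtype.val this

end Crux

section Closure

variable {A G : Type*} [Group A] [Group G]

lemma normal_sup' {S T : Subgroup G} (hS : S.Normal) (hT : T.Normal) : (S ⊔ T).Normal := by
  haveI := hT
  constructor
  intro x hx g
  have hx' : x ∈ (↑S * ↑T : Set G) := by rw [← Subgroup.mul_normal S T]; exact hx
  obtain ⟨s, hs, t, ht, rfl⟩ := hx'
  have h2 : g * (s * t) * g⁻¹ = (g * s * g⁻¹) * (g * t * g⁻¹) := by group
  rw [h2, ← SetLike.mem_coe, Subgroup.mul_normal S T]
  exact Set.mul_mem_mul (hS.conj_mem s hs g) (hT.conj_mem t ht g)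

lemma card_sup_dvd [Finite G] {S T : Subgroup G} (hS : S.Normal) (hT : T.Normal) :
    Nat.card ↥(S ⊔ T) ∣ Nat.card ↥S * Nat.card ↥T := by
  haveI := hT
  set L := S ⊔ T with hL
  set T' : Subgroup ↥L := T.subgroupOf L with hT'
  haveI : T'.Normal := by
    constructor
    intro x hx g
    exact hT.conj_mem _ hx _
  have hcard : Nat.card ↥L = Nat.card (↥L ⧸ T') * Nat.card ↥T' := by
    exact Subgroup.card_eq_card_quotient_mul_card_subgroup T'
  have hT'card : Nat.card ↥T' = Nat.card ↥T := by
    exact Nat.card_congr (Subgroup.subgroupOfEquivOfLe le_sup_right).toEquiv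
  have hsurj : Function.Surjective
      ((QuotientGroup.mk' T').comp (Subgroup.inclusion (le_sup_left : S ≤ L))) := by
    intro q
    induction q using QuotientGroup.induction_on with
    | H x =>
      have hx : (x : G) ∈ (↑S * ↑T : Set G) := by rw [← Subgroup.mul_normal S T]; exact x.2
      obtain ⟨s, hs, t, ht, hst⟩ := hx
      refine ⟨⟨s, hs⟩, ?_⟩
      simp only [MonoidHom.comp_apply, QuotientGroup.mk'_apply]
      rw [QuotientGroup.eq]
      show ((Subgroup.inclusion (le_sup_left : S ≤ L) ⟨s, hs⟩ : ↥L) : G)⁻¹ * (x : G) ∈ T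
      have : ((Subgroup.inclusion (le_sup_left : S ≤ L) ⟨s, hs⟩ : ↥L) : G) = s := rfl
      rw [this, ← hst]
      simpa using ht
  have hdvd : Nat.card (↥L ⧸ T') ∣ Nat.card ↥S :=
    Subgroup.card_dvd_of_surjective _ hsurj
  rw [hcard, hT'card]
  exact Nat.mul_dvd_mul hdvd dvd_rfl

variable (φ : A →* MulAut G) [Finite A] [Finite G]

lemma exists_invariant_closure {p : ℕ} (hp : p.Prime) (N : Subgroup G) (hNn : N.Normal)
    (hNne : N ≠ ⊥)
    (hNcard : (∃ k, Nat.card ↥N = p ^ k) ∨ ¬ p ∣ Nat.card ↥N) :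
    ∃ M : Subgroup G, M.Normal ∧ M ≠ ⊥ ∧ (∀ a : A, ∀ x ∈ M, φ a x ∈ M) ∧
      (IsPGroup p ↥M ∨ ¬ p ∣ Nat.card ↥M) := by
  classical
  haveI := Fintype.ofFinite A
  set f : A → Subgroup G := fun a => N.map (φ a).toMonoidHom with hf
  have hfn : ∀ a, (f a).Normal := fun a => hNn.map _ (φ a).surjective
  have hfcard : ∀ a, Nat.card ↥(f a) = Nat.card ↥N := fun a =>
    (Nat.card_congr (Subgroup.equivMapOfInjective N _ (φ a).injective).toEquiv).symm
  set M : Subgroup G := ⨆ a : A, f a with hM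
  have hMsup : M = Finset.univ.sup f := by
    rw [Finset.sup_eq_iSup]
    simp [hM]
  have hNleM : N ≤ M := by
    have h1 : f 1 = N := by
      ext x
      simp [hf]
    exact h1 ▸ le_iSup f 1
  have hMinv : ∀ a : A, ∀ x ∈ M, φ a x ∈ M := by
    intro a x hx
    have : M.map (φ a).toMonoidHom ≤ M := by
      rw [hM, Subgroup.map_iSup]
      apply iSup_le
      intro c
      have : (f c).map (φ a).toMonoidHom = f (a * c) := by
        rw [hf]
        simp only
        rw [Subgroup.map_map]
        congr 1
        ext x
        exact (phi_mul_apply φ a c x).symm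
      rw [this]
      exact le_iSup f (a * c)
    exact this ⟨x, hx, rfl⟩
  -- normality and card via Finset.sup_induction
  rcases hNcard with ⟨k, hk⟩ | hk
  · have key : (Finset.univ.sup f).Normal ∧ IsPGroup p ↥(Finset.univ.sup f) := by
      refine Finset.sup_induction (p := fun S : Subgroup G => S.Normal ∧ IsPGroup p ↥S)
        ⟨inferInstance, IsPGroup.of_bot⟩ ?_ ?_
      · rintro S ⟨hSn, hSp⟩ T ⟨hTn, hTp⟩
        haveI := hTn
        exact ⟨normal_sup' hSn hTn, IsPGroup.to_sup_of_normal_right hSp hTp⟩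
      · intro a _
        exact ⟨hfn a, (IsPGroup.of_card hk).map _⟩
    rw [← hMsup] at key
    exact ⟨M, key.1, fun h => hNne (le_bot_iff.mp (h ▸ hNleM)), hMinv, Or.inl key.2⟩
  · have key : (Finset.univ.sup f).Normal ∧ ¬ p ∣ Nat.card ↥(Finset.univ.sup f) := by
      refine Finset.sup_induction (p := fun S : Subgroup G => S.Normal ∧ ¬ p ∣ Nat.card ↥S)
        ⟨inferInstance, by rw [Subgroup.card_bot]; exact Nat.Prime.not_dvd_one hp⟩ ?_ ?_
      · rintro S ⟨hSn, hSp⟩ T ⟨hTn, hTp⟩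
        refine ⟨normal_sup' hSn hTn, fun hdvd => ?_⟩
        have := (card_sup_dvd hSn hTn)
        have hpd := hdvd.trans this
        rcases (Nat.Prime.dvd_mul hp).mp hpd with h | h
        · exact hSp h
        · exact hTp h
      · intro a _
        exact ⟨hfn a, by rw [hfcard a]; exact hk⟩
    rw [← hMsup] at key
    exact ⟨M, key.1, fun h => hNne (le_bot_iff.mp (h ▸ hNleM)), hMinv, Or.inr key.2⟩

end Closure

section MinimalNormal

variable {G : Type*} [Group G]

lemma exists_small_normal {p : ℕ} (hGp : IsPSolvableGroup p G)
    (hnt : (⊥ : Subgroup G) ≠ ⊤) :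
    ∃ N : Subgroup G, N.Normal ∧ N ≠ ⊥ ∧
      ((∃ k, Nat.card ↥N = p ^ k) ∨ ¬ p ∣ Nat.card ↥N) := by
  classical
  obtain ⟨n, s, h0, hlast, hnorm, hmono, hfac⟩ := hGp
  have hex : ∃ j : ℕ, ∃ hj : j < n + 1, s ⟨j, hj⟩ ≠ ⊥ := by
    refine ⟨n, n.lt_succ_self, ?_⟩
    have : (⟨n, n.lt_succ_self⟩ : Fin (n + 1)) = Fin.last n := rfl
    rw [this, hlast]
    exact fun h => hnt h.symm
  set j := Nat.find hex with hj
  obtain ⟨hjlt, hjne⟩ := Nat.find_spec hex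
  have hj0 : j ≠ 0 := by
    intro h
    apply hjne
    have : (⟨j, hjlt⟩ : Fin (n + 1)) = 0 := by
      ext; simp [h]
    rw [this, h0]
  have hj1 : 1 ≤ j := Nat.one_le_iff_ne_zero.mpr hj0
  have hjn : j - 1 < n := by omega
  set i : Fin n := ⟨j - 1, hjn⟩ with hi
  have hprev : s i.castSucc = ⊥ := by
    have hlt : j - 1 < j := by omega
    have := Nat.find_min hex hlt
    push_neg at this
    have h2 := this (by omega : j - 1 < n + 1)
    have : i.castSucc = ⟨j - 1, by omega⟩ := rfl
    rw [this]
    by_contra hne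
    exact hne (by simpa using h2)
  have hsucc : i.succ = ⟨j, hjlt⟩ := by
    ext
    simp [hi]
    omega
  have := hfac i
  rw [hprev, hsucc, Subgroup.relIndex_bot_left] at this
  exact ⟨s ⟨j, hjlt⟩, hnorm _, hjne, this⟩

end MinimalNormal

section LemmaB

variable {A G : Type*} [Group A] [Group G] (φ : A →* MulAut G)

lemma isPGroup_of_le {p : ℕ} {H L : Subgroup G} (h : IsPGroup p ↥H) (hle : L ≤ H) :
    IsPGroup p ↥L := by
  intro x
  obtain ⟨k, hk⟩ := h ⟨(x : G), hle x.2⟩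
  refine ⟨k, ?_⟩
  have : ((⟨(x : G), hle x.2⟩ : ↥H) ^ p ^ k : ↥H) = 1 := hk
  apply Subtype.ext
  simpa [SubgroupClass.coe_pow] using congrArg Subtype.val this

/-- If both `H` and `B` are `p`-groups and the action is good, then `[H,B] = ⊥`. -/
lemma actCommutator_eq_bot_of_pgroups [Finite A] [Finite G]
    (hgood : IsGoodAction φ) {p : ℕ} (hp : p.Prime)
    {H : Subgroup G} {B : Subgroup A} (hinv : ActInvariant φ B H)
    (hHp : IsPGroup p ↥H) (hBp : IsPGroup p ↥B) :
    actCommutator φ H B = ⊥ := by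
  have hLH : actCommutator φ H B ≤ H := actCommutator_le φ hinv
  have hLinv := actCommutator_invariant φ hinv
  have hLp : IsPGroup p ↥(actCommutator φ H B) := isPGroup_of_le hHp hLH
  have hidem := actCommutator_idem φ hgood hinv
  exact crux_pgroup φ hp hLinv hLp hBp hidem.le

lemma fixed_of_actCommutator_eq_bot {H : Subgroup G} {B : Subgroup A}
    (hbot : actCommutator φ H B = ⊥) {b : A} (hb : b ∈ B) {h : G} (hh : h ∈ H) :
    φ b h = h := by
  have := gen_mem_actCommutator φ hh hb
  rw [hbot, Subgroup.mem_bot] at this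
  have : φ b h = h * 1 := by rw [← this]; group
  simpa using this

end LemmaB

section QuotAction

variable {A G : Type*} [Group A] [Group G] (φ : A →* MulAut G)
variable (M : Subgroup G) [hMn : M.Normal] (hMinv : ∀ a : A, ∀ x ∈ M, φ a x ∈ M)

/-- The induced action on the quotient by an invariant normal subgroup. -/
def quotAction : A →* MulAut (G ⧸ M) where
  toFun a :=
    { toFun := QuotientGroup.map M M (φ a).toMonoidHom (fun x hx => hMinv a x hx)
      invFun := QuotientGroup.map M M (φ a⁻¹).toMonoidHom (fun x hx => hMinv a⁻¹ x hx)
      left_inv := fun q => by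
        induction q using QuotientGroup.induction_on with
        | H x =>
          change ((φ a⁻¹ (φ a x) : G) : G ⧸ M) = x
          rw [← phi_mul_apply, inv_mul_cancel, map_one, MulAut.one_apply]
      right_inv := fun q => by
        induction q using QuotientGroup.induction_on with
        | H x =>
          change ((φ a (φ a⁻¹ x) : G) : G ⧸ M) = x
          rw [← phi_mul_apply, mul_inv_cancel, map_one, MulAut.one_apply]
      map_mul' := fun x y => map_mul _ x y }
  map_one' := by
    ext q
    induction q using QuotientGroup.induction_on with
    | H x =>
      simp only [MulEquiv.coe_mk, Equiv.coe_fn_mk, QuotientGroup.map_mk,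
        MulEquiv.coe_toMonoidHom, map_one, MulAut.one_apply]
  map_mul' := fun a b => by
    ext q
    induction q using QuotientGroup.induction_on with
    | H x =>
      simp only [MulEquiv.coe_mk, Equiv.coe_fn_mk, QuotientGroup.map_mk,
        MulEquiv.coe_toMonoidHom, MulAut.mul_apply, phi_mul_apply]
      exact congrArg _ (phi_mul_apply φ a b x)

lemma quotAction_mk (a : A) (x : G) :
    quotAction φ M hMinv a ((x : G ⧸ M)) = ((φ a x : G) : G ⧸ M) :=
  QuotientGroup.map_mk M M (φ a).toMonoidHom (fun y hy => hMinv a y hy) x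

lemma quotAction_mk' (a : A) (x : G) :
    quotAction φ M hMinv a ((QuotientGroup.mk' M) x) = (QuotientGroup.mk' M) (φ a x) :=
  quotAction_mk φ M hMinv a x

lemma quotAction_good (hgood : IsGoodAction φ) : IsGoodAction (quotAction φ M hMinv) := by
  intro B' H' hinv'
  set π := QuotientGroup.mk' M with hπ
  set H := H'.comap π with hH
  have hmem : ∀ g : G, g ∈ H ↔ ((g : G ⧸ M) ∈ H') := fun g => Iff.rfl
  have hinvH : ActInvariant φ B' H := by
    intro b hb h hh
    rw [hmem, ← quotAction_mk φ M hMinv]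
    exact hinv' b hb _ ((hmem h).mp hh)
  have hgd := hgood B' H hinvH
  have himg : ∀ y ∈ actCommutator φ H B',
      ((y : G ⧸ M)) ∈ actCommutator (quotAction φ M hMinv) H' B' := by
    intro y hy
    induction hy using Subgroup.closure_induction with
    | mem z hz =>
      obtain ⟨h, hh, b, hb, rfl⟩ := hz
      have : ((h⁻¹ * φ b h : G) : G ⧸ M) =
          ((h : G ⧸ M))⁻¹ * quotAction φ M hMinv b ((h : G ⧸ M)) := by
        rw [quotAction_mk]
        push_cast
        rfl
      rw [this]
      exact gen_mem_actCommutator _ ((hmem h).mp hh) hb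
    | one => simpa using one_mem _
    | mul y z _ _ hy hz => rw [QuotientGroup.mk_mul]; exact mul_mem hy hz
    | inv y _ hy => rw [QuotientGroup.mk_inv]; exact inv_mem hy
  apply Set.Subset.antisymm
  · intro q hq
    obtain ⟨g, rfl⟩ := QuotientGroup.mk'_surjective M q
    have hg : g ∈ H := hq
    have : g ∈ (actCommutator φ H B' : Set G) * (actCentralizerIn φ H B' : Set G) := by
      rw [← hgd]; exact hg
    obtain ⟨y, hy, c, hc, rfl⟩ := this
    have hsplit : (QuotientGroup.mk' M) (y * c) = ((y : G ⧸ M)) * ((c : G ⧸ M)) := rfl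
    rw [hsplit]
    refine Set.mul_mem_mul (himg y hy) ?_
    refine ⟨(hmem c).mp hc.1, ?_⟩
    intro b hb
    rw [quotAction_mk]
    exact congrArg _ (hc.2 b hb)
  · rintro q ⟨y, hy, c, hc, rfl⟩
    exact mul_mem (actCommutator_le _ hinv' hy) hc.1

lemma actCommutator_top_map (B : Subgroup A) :
    (actCommutator φ ⊤ B).map (QuotientGroup.mk' M) =
      actCommutator (quotAction φ M hMinv) ⊤ B := by
  apply le_antisymm
  · rw [Subgroup.map_le_iff_le_comap]
    apply (Subgroup.closure_le _).2
    rintro x ⟨h, -, b, hb, rfl⟩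
    show ((h⁻¹ * φ b h : G) : G ⧸ M) ∈ actCommutator (quotAction φ M hMinv) ⊤ B
    have : ((h⁻¹ * φ b h : G) : G ⧸ M) =
        ((h : G ⧸ M))⁻¹ * quotAction φ M hMinv b ((h : G ⧸ M)) := by
      rw [quotAction_mk]; push_cast; rfl
    rw [this]
    exact gen_mem_actCommutator _ (Subgroup.mem_top _) hb
  · apply (Subgroup.closure_le _).2
    rintro x ⟨q, -, b, hb, rfl⟩
    obtain ⟨g, rfl⟩ := QuotientGroup.mk'_surjective M q
    have : ((QuotientGroup.mk' M) g)⁻¹ * quotAction φ M hMinv b ((QuotientGroup.mk' M) g) =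
        (QuotientGroup.mk' M) (g⁻¹ * φ b g) := by
      rw [map_mul, map_inv, quotAction_mk']
    rw [this]
    exact Subgroup.mem_map_of_mem _ (gen_mem_actCommutator φ (Subgroup.mem_top g) hb)

lemma quot_psolvable {p : ℕ} (hp : p.Prime) (hGp : IsPSolvableGroup p G) :
    IsPSolvableGroup p (G ⧸ M) := by
  obtain ⟨n, s, h0, hlast, hnorm, hmono, hfac⟩ := hGp
  refine ⟨n, fun i => (s i).map (QuotientGroup.mk' M), ?_, ?_, ?_, ?_, ?_⟩
  · simp only [h0, Subgroup.map_bot]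
  · simp only [hlast]
    exact Subgroup.map_top_of_surjective _ (QuotientGroup.mk'_surjective M)
  · intro i
    exact (hnorm i).map _ (QuotientGroup.mk'_surjective M)
  · intro i
    exact Subgroup.map_mono (hmono i)
  · intro i
    have hdvd : ((s i.castSucc).map (QuotientGroup.mk' M)).relIndex
        ((s i.succ).map (QuotientGroup.mk' M)) ∣
        (s i.castSucc).relIndex (s i.succ) := by
      have h1 : ((s i.castSucc).map (QuotientGroup.mk' M)).relIndex
          ((s i.succ).map (QuotientGroup.mk' M)) =
          ((s i.castSucc) ⊔ M).relIndex (s i.succ) := by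
        rw [← Subgroup.relIndex_comap, Subgroup.comap_map_eq, QuotientGroup.ker_mk']
      rw [h1]
      exact Subgroup.relIndex_dvd_of_le_left _ le_sup_left
    rcases hfac i with ⟨k, hk⟩ | hk
    · rw [hk] at hdvd
      obtain ⟨j, -, hj⟩ := (Nat.dvd_prime_pow hp).mp hdvd
      exact Or.inl ⟨j, hj⟩
    · exact Or.inr fun hdvd' => hk (hdvd'.trans hdvd)

end QuotAction

section Main

universe uG

variable {A : Type*} [Group A] [Finite A]

theorem aux_main {p : ℕ} (hp : p.Prime) (B : Subgroup A) (hB : IsPGroup p ↥B) :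
    ∀ (n : ℕ) (G : Type uG) (_ : Group G) (_ : Finite G), Nat.card G ≤ n →
      ∀ (φ : A →* MulAut G), IsGoodAction φ → IsPSolvableGroup p G →
      ¬ p ∣ Nat.card ↥(actCommutator φ ⊤ B) := by
  intro n
  induction n with
  | zero =>
    intro G _ _ hcard
    have := Nat.card_pos (α := G)
    omega
  | succ n ih =>
    intro G _ _ hcard φ hgood hGp
    haveI : Fact p.Prime := ⟨hp⟩
    by_cases htriv : (⊥ : Subgroup G) = ⊤
    · intro hdvd
      have h1 : ∀ g : G, g = 1 := fun g => by
        have : g ∈ (⊥ : Subgroup G) := htriv ▸ Subgroup.mem_top g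
        simpa using this
      haveI : Subsingleton G := ⟨fun a b => by rw [h1 a, h1 b]⟩
      have hc : Nat.card G = 1 := Nat.card_eq_one_iff_unique.mpr
        ⟨⟨fun a b => by rw [h1 a, h1 b]⟩, ⟨1⟩⟩
      have h2 := hdvd.trans (Subgroup.card_subgroup_dvd_card _)
      rw [hc] at h2
      exact Nat.Prime.not_dvd_one hp h2
    · obtain ⟨N, hNn, hNne, hNcard⟩ := exists_small_normal hGp htriv
      obtain ⟨M, hMn, hMne, hMinv, hMcase⟩ := exists_invariant_closure φ hp N hNn hNne hNcard
      haveI := hMn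
      set π := QuotientGroup.mk' M with hπ
      set K := actCommutator φ ⊤ B with hKdef
      have htopinv : ActInvariant φ B ⊤ := fun b _ h _ => Subgroup.mem_top _
      have hKinv : ActInvariant φ B K := actCommutator_invariant φ htopinv
      -- induction hypothesis applied to the quotient
      have hq1 : Nat.card (G ⧸ M) ≤ n := by
        have h1 : Nat.card (G ⧸ M) * Nat.card ↥M = Nat.card G :=
          (Subgroup.card_eq_card_quotient_mul_card_subgroup M).symm
        have h2 : 1 < Nat.card ↥M := M.one_lt_card_iff_ne_bot.mpr hMne
        have h3 : 0 < Nat.card (G ⧸ M) := Nat.card_pos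
        nlinarith
      haveI : Finite (G ⧸ M) := Quotient.finite _
      have hquot := ih (G ⧸ M) inferInstance inferInstance hq1 (quotAction φ M hMinv)
        (quotAction_good φ M hMinv hgood) (quot_psolvable M hp hGp)
      have hKmap : K.map π = actCommutator (quotAction φ M hMinv) ⊤ B :=
        actCommutator_top_map φ M hMinv B
      have hpKmap : ¬ p ∣ Nat.card ↥(K.map π) := by rw [hKmap]; exact hquot
      -- counting
      have hcardK : Nat.card ↥K = Nat.card ↥(M ⊓ K) * Nat.card ↥(K.map π) := by
        set ψ : ↥K →* G ⧸ M := π.comp K.subtype with hψ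
        have hker : ψ.ker = (M ⊓ K).subgroupOf K := by
          ext x
          constructor
          · intro hx
            have hx1 : (QuotientGroup.mk' M) (x : G) = 1 := hx
            have : (x : G) ∈ M := (QuotientGroup.eq_one_iff _).mp hx1
            exact Subgroup.mem_subgroupOf.mpr ⟨this, x.2⟩
          · intro hx
            have := Subgroup.mem_subgroupOf.mp hx
            show (QuotientGroup.mk' M) (x : G) = 1
            exact (QuotientGroup.eq_one_iff _).mpr this.1
        have hrange : ψ.range = K.map π := by
          ext q
          constructor
          · rintro ⟨x, rfl⟩; exact ⟨x.1, x.2, rfl⟩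
          · rintro ⟨g, hg, rfl⟩; exact ⟨⟨g, hg⟩, rfl⟩
        have e := QuotientGroup.quotientKerEquivRange ψ
        have hcq : Nat.card (↥K ⧸ ψ.ker) = Nat.card ↥(K.map π) := by
          rw [← hrange]; exact Nat.card_congr e.toEquiv
        have h1 : Nat.card ↥K = Nat.card (↥K ⧸ ψ.ker) * Nat.card ↥(ψ.ker) :=
          Subgroup.card_eq_card_quotient_mul_card_subgroup ψ.ker
        have h2 : Nat.card ↥(ψ.ker) = Nat.card ↥(M ⊓ K) := by
          rw [hker]
          exact Nat.card_congr (Subgroup.subgroupOfEquivOfLe inf_le_right).toEquiv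
        rw [h1, hcq, h2, Nat.mul_comm]
      rcases hMcase with hMp | hMp'
      · -- M is a p-group : show M ⊓ K = ⊥
        have hMinvB : ActInvariant φ B M := fun b _ m hm => hMinv b m hm
        have hMbot : actCommutator φ M B = ⊥ :=
          actCommutator_eq_bot_of_pgroups φ hgood hp hMinvB hMp hB
        have hfix : ∀ b ∈ B, ∀ m ∈ M, φ b m = m := fun b hb m hm =>
          fixed_of_actCommutator_eq_bot φ hMbot hb hm
        have hcomm : ∀ k ∈ K, ∀ m ∈ M, k * m * k⁻¹ = m := by
          intro k hk
          induction hk using Subgroup.closure_induction with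
          | mem z hz =>
            obtain ⟨g, -, b, hb, rfl⟩ := hz
            intro m hm
            have h1 : φ b (g * m * g⁻¹) = g * m * g⁻¹ := hfix b hb _ (hMn.conj_mem m hm g)
            have h2 : φ b (g * m * g⁻¹) = φ b g * m * (φ b g)⁻¹ := by
              rw [map_mul, map_mul, map_inv, hfix b hb m hm]
            calc g⁻¹ * φ b g * m * (g⁻¹ * φ b g)⁻¹
                = g⁻¹ * (φ b g * m * (φ b g)⁻¹) * g := by group
              _ = g⁻¹ * (g * m * g⁻¹) * g := by rw [← h2, h1]
              _ = m := by group
          | one => intro m hm; group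
          | mul x y _ _ ihx ihy =>
            intro m hm
            have h2 := ihy m hm
            calc x * y * m * (x * y)⁻¹ = x * (y * m * y⁻¹) * x⁻¹ := by group
              _ = x * m * x⁻¹ := by rw [h2]
              _ = m := ihx m hm
          | inv x _ ihx =>
            intro m hm
            have hm' : x⁻¹ * m * x ∈ M := by
              have := hMn.conj_mem m hm x⁻¹
              simpa [inv_inv] using this
            have h2 := ihx _ hm'
            have h3 : x * (x⁻¹ * m * x) * x⁻¹ = m := by group
            rw [inv_inv]
            exact h2.symm.trans h3
        set D : Subgroup G := M ⊓ K with hD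
        set D' : Subgroup ↥K := D.subgroupOf K with hD'
        haveI hD'n : D'.Normal := by
          constructor
          intro x hx g
          have hx1 : (x : G) ∈ D := hx
          have hcm : (g : G) * x * (g : G)⁻¹ = (x : G) := hcomm g g.2 x hx1.1
          have hcoe : ((g * x * g⁻¹ : ↥K) : G) = (x : G) := by push_cast; exact hcm
          show ((g * x * g⁻¹ : ↥K) : G) ∈ D
          rw [hcoe]; exact hx1
        have hcardD' : Nat.card ↥D' = Nat.card ↥D :=
          Nat.card_congr (Subgroup.subgroupOfEquivOfLe inf_le_right).toEquiv
        have hDp : IsPGroup p ↥D := isPGroup_of_le hMp inf_le_left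
        obtain ⟨a, haD⟩ := hDp.exists_card_eq
        have hidx : D'.index = Nat.card ↥(K.map π) := by
          have h1 : Nat.card ↥D' * D'.index = Nat.card ↥K := Subgroup.card_mul_index D'
          rw [hcardD', hcardK] at h1
          have hDpos : 0 < Nat.card ↥D := Nat.card_pos
          exact Nat.eq_of_mul_eq_mul_left hDpos h1
        have hcop : Nat.Coprime (Nat.card ↥D') D'.index := by
          rw [hcardD', haD, hidx]
          exact Nat.Coprime.pow_left a ((Nat.Prime.coprime_iff_not_dvd hp).mpr hpKmap)
        obtain ⟨H', hH'⟩ := Subgroup.exists_right_complement'_of_coprime hcop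
        set H : Subgroup G := H'.map K.subtype with hH
        have hHleK : H ≤ K := Subgroup.map_subtype_le H'
        have hcardH : Nat.card ↥H = Nat.card ↥H' :=
          (Nat.card_congr (Subgroup.equivMapOfInjective H' K.subtype
            K.subtype_injective).toEquiv).symm
        have hcardH' : Nat.card ↥H' = D'.index := by
          have h1 : Nat.card ↥D' * Nat.card ↥H' = Nat.card ↥K := hH'.card_mul
          have h2 : Nat.card ↥D' * D'.index = Nat.card ↥K := Subgroup.card_mul_index D'
          have hD'pos : 0 < Nat.card ↥D' := Nat.card_pos
          exact Nat.eq_of_mul_eq_mul_left hD'pos (h1.trans h2.symm)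
        have hpH : ¬ p ∣ Nat.card ↥H := by rw [hcardH, hcardH', hidx]; exact hpKmap
        have hDHbot : ∀ x : G, x ∈ D → x ∈ H → x = 1 := by
          intro x hxD hxH
          obtain ⟨y, hy, rfl⟩ := hxH
          have hyD' : y ∈ D' := Subgroup.mem_subgroupOf.mpr hxD
          have hmem : y ∈ D' ⊓ H' := ⟨hyD', hy⟩
          rw [disjoint_iff.mp hH'.disjoint, Subgroup.mem_bot] at hmem
          rw [hmem]
          rfl
        have hfact : ∀ k : ↥K, ∃ d h : G, d ∈ D ∧ h ∈ H ∧ (k : G) = d * h := by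
          intro k
          obtain ⟨⟨d, h⟩, hdh, -⟩ := hH'.existsUnique k
          refine ⟨(d : ↥K), (h : ↥K), d.2, ⟨(h : ↥K), h.2, rfl⟩, ?_⟩
          have := congrArg (Subtype.val : ↥K → G) hdh
          push_cast at this
          exact this.symm
        have horder : ∀ g : G, g ∈ H ↔ g ∈ K ∧ ¬ p ∣ orderOf g := by
          intro g
          constructor
          · intro hg
            exact ⟨hHleK hg, fun hdvd => hpH (hdvd.trans (H.orderOf_dvd_natCard hg))⟩
          · rintro ⟨hgK, hord⟩
            obtain ⟨d, h, hdD, hhH, hdh⟩ := hfact ⟨g, hgK⟩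
            have hcommdh : Commute d h := by
              have := hcomm h (hHleK hhH) d hdD.1
              have h2 : h * d = d * h := by
                nth_rewrite 2 [← this]
                group
              exact h2.symm
            have hgn : g ^ orderOf g = 1 := pow_orderOf_eq_one g
            have hprod : d ^ orderOf g * h ^ orderOf g = 1 := by
              rw [← hcommdh.mul_pow]
              show ((d * h : G)) ^ orderOf g = 1
              rw [← hdh]
              exact hgn
            have hdnn : d ^ orderOf g ∈ D := pow_mem hdD (orderOf g)
            have hhnnH : (h ^ orderOf g)⁻¹ ∈ H := inv_mem (pow_mem hhH (orderOf g))
            have hd1 : d ^ orderOf g = (h ^ orderOf g)⁻¹ := eq_inv_of_mul_eq_one_left hprod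
            have hdone : d ^ orderOf g = 1 := hDHbot _ hdnn (hd1 ▸ hhnnH)
            have hod : orderOf d ∣ orderOf g := orderOf_dvd_of_pow_eq_one hdone
            obtain ⟨j, hj⟩ := hMp ⟨d, hdD.1⟩
            have hdpj : d ^ p ^ j = 1 := by
              have := congrArg (Subtype.val : ↥M → G) hj
              push_cast at this
              exact this
            have hodp : orderOf d ∣ p ^ j := orderOf_dvd_of_pow_eq_one hdpj
            have hcopj : Nat.Coprime (p ^ j) (orderOf g) :=
              Nat.Coprime.pow_left j ((Nat.Prime.coprime_iff_not_dvd hp).mpr hord)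
            have : orderOf d ∣ 1 := by
              rw [← Nat.coprime_iff_gcd_eq_one.mp hcopj]
              exact Nat.dvd_gcd hodp hod
            have hdeq1 : d = 1 := orderOf_eq_one_iff.mp (Nat.dvd_one.mp this)
            have hdh' : g = d * h := hdh
            have hgh : g = h := by rw [hdh', hdeq1, one_mul]
            rw [hgh]
            exact hhH
        have hHinv : ActInvariant φ B H := by
          intro b hb h hh
          rw [horder] at hh ⊢
          refine ⟨hKinv b hb h hh.1, ?_⟩
          rw [MulEquiv.orderOf_eq (φ b) h]
          exact hh.2
        have hidem : K = actCommutator φ K B := actCommutator_idem φ hgood htopinv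
        have hKleH : K ≤ H := by
          have hle : actCommutator φ K B ≤ H := by
            apply (Subgroup.closure_le _).2
            rintro x ⟨k, hk, b, hb, rfl⟩
            obtain ⟨d, h, hdD, hhH, hkdh⟩ := hfact ⟨k, hk⟩
            have hfd : φ b d = d := hfix b hb d hdD.1
            have hshape : k⁻¹ * φ b k = h⁻¹ * φ b h := by
              show k⁻¹ * φ b k = h⁻¹ * φ b h
              have hk' : k = d * h := hkdh
              rw [hk', map_mul, hfd]
              group
            rw [hshape]
            exact mul_mem (inv_mem hhH) (hHinv b hb h hhH)
          calc K = actCommutator φ K B := hidem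
            _ ≤ H := hle
        have hDbot : D = ⊥ := by
          rw [Subgroup.eq_bot_iff_forall]
          intro x hx
          exact hDHbot x hx (hKleH hx.2)
        intro hdvd
        rw [hcardK] at hdvd
        rw [hDbot, Subgroup.card_bot, one_mul] at hdvd
        exact hpKmap hdvd
      · intro hdvd
        rw [hcardK] at hdvd
        rcases (Nat.Prime.dvd_mul hp).mp hdvd with h | h
        · exact hMp' (h.trans (Subgroup.card_dvd_of_le inf_le_left))
        · exact hpKmap h

end Main


/-- Let a finite group `A` act by automorphisms on a finite group `G` with
good action, let `p` be a prime dividing `|A|`, let `B` be a `p`-subgroup of `A`, and suppose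
`G` is `p`-solvable.  Then `[G,B]` is a `p'`-group. -/
theorem commutator_with_p_subgroup_is_p'_group {A G : Type*} [Group A] [Group G]
    [Finite A] [Finite G]
    (φ : A →* MulAut G) (hgood : IsGoodAction φ)
    (p : ℕ) (hp : p.Prime) (hpA : p ∣ Nat.card A)
    (B : Subgroup A) (hB : IsPGroup p ↥B)
    (hGp : IsPSolvableGroup p G) :
    ¬ p ∣ Nat.card ↥(actCommutator φ ⊤ B) := by
  exact aux_main hp B hB (Nat.card G) G inferInstance inferInstance le_rfl φ hgood hGp
end
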